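/- Suppose ‖[A_X(t), B_Y]‖ ≤ C|X| e^{−μ·dist(X,Y)} for all operators B_Y of norm at most 1 supported on the complement of the ball S of radius r around X, with dist(X, complement of S) ≥ r. Then the partial-trace approximation O' = (1/tr 1_{S̄}) tr_{S̄}(A_X(t)) ⊗ 1_{S̄} satisfies ‖A_X(t) − O'‖ ≤ C|X| e^{−μr}. -/

import Mathlib

open Matrix
open scoped Matrix.Norms.L2Operator Kronecker

namespace PTA18

noncomputable def zet (n : ℕ) : ℂ := Complex.exp (2 * Real.pi * Complex.I / n)

variable {n : ℕ}

lemma zet_prim (hn : 0 < n) : IsPrimitiveRoot (zet n) n :=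
  Complex.isPrimitiveRoot_exp n hn.ne'

lemma zet_ne_zero (hn : 0 < n) : zet n ≠ 0 := Complex.exp_ne_zero _

lemma conj_zet {n : ℕ} : (starRingEnd ℂ) (zet n) = (zet n)⁻¹ := by
  rw [zet, ← Complex.exp_conj, ← Complex.exp_neg]
  congr 1
  simp [map_div₀, Complex.conj_I, map_ofNat]
  ring

lemma star_zet {n : ℕ} (m : ℤ) : star ((zet n) ^ m) = (zet n) ^ (-m) := by
  rw [show star ((zet n) ^ m) = (star (zet n)) ^ m from (star_zpow₀ _ _)]
  rw [show (star (zet n)) = (zet n)⁻¹ from conj_zet, _root_.inv_zpow, ← _root_.zpow_neg]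

lemma rootsum (hn : 0 < n) (p q : Fin n) :
    ∑ b : Fin n, (zet n) ^ (((b : ℕ) : ℤ) * ((p : ℤ) - (q : ℤ))) =
      if p = q then (n : ℂ) else 0 := by
  have hζ0 := zet_ne_zero hn
  set d : ℤ := (p : ℤ) - (q : ℤ) with hd
  have hterm : ∀ b : Fin n, (zet n) ^ (((b : ℕ) : ℤ) * d) = ((zet n) ^ d) ^ (b : ℕ) := by
    intro b
    rw [mul_comm, _root_.zpow_mul, zpow_natCast]
  simp only [hterm]
  rw [Fin.sum_univ_eq_sum_range (fun i => ((zet n) ^ d) ^ i)]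
  by_cases hpq : p = q
  · simp [hpq, hd]
  · rw [if_neg hpq]
    have hx1 : (zet n) ^ d ≠ 1 := by
      rw [Ne, (zet_prim hn).zpow_eq_one_iff_dvd]
      intro hdvd
      have hd0 : d = 0 := by
        refine Int.eq_zero_of_abs_lt_dvd hdvd ?_
        have := p.isLt; have := q.isLt
        rw [hd, abs_lt]
        constructor <;> omega
      apply hpq
      have : (p : ℤ) = (q : ℤ) := by omega
      exact Fin.ext (by exact_mod_cast this)
    rw [geom_sum_eq hx1]
    have hxn : ((zet n) ^ d) ^ n = 1 := by
      rw [← zpow_natCast ((zet n)^d), ← _root_.zpow_mul, mul_comm, _root_.zpow_mul, zpow_natCast,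
        (zet_prim hn).pow_eq_one, _root_.one_zpow]
    rw [hxn]
    simp


noncomputable def Wop (n : ℕ) (a b : Fin n) : Matrix (Fin n) (Fin n) ℂ :=
  Matrix.of fun j k => if k = j - a then (zet n) ^ (((b : ℕ) : ℤ) * ((k : ℕ) : ℤ)) else 0

lemma Wop_mul_conjTranspose [NeZero n] (a b : Fin n) :
    Wop n a b * (Wop n a b)ᴴ = 1 := by
  ext j k
  rw [Matrix.mul_apply]
  simp only [Wop, Matrix.conjTranspose_apply, Matrix.of_apply]
  simp only [apply_ite (star : ℂ → ℂ), star_zero, ite_mul, zero_mul, mul_ite, mul_zero]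
  rw [Finset.sum_ite_eq' Finset.univ (k - a)]
  simp only [Finset.mem_univ, if_true]
  by_cases hjk : j = k
  · subst hjk
    have hζ0 : zet n ≠ 0 := zet_ne_zero (Nat.pos_of_ne_zero (NeZero.ne n))
    simp [conj_zet]
    exact mul_inv_cancel₀ (zpow_ne_zero _ hζ0)
  · have : ¬ (k - a = j - a) := fun h => hjk (by
      have := congrArg (· + a) h
      simpa using this.symm)
    rw [if_neg this, Matrix.one_apply_ne hjk]

lemma one_kron_conjTranspose {m : ℕ} (M : Matrix (Fin n) (Fin n) ℂ) :
    ((1 : Matrix (Fin m) (Fin m) ℂ) ⊗ₖ M)ᴴ = (1 : Matrix (Fin m) (Fin m) ℂ) ⊗ₖ Mᴴ := by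
  ext ⟨s, j⟩ ⟨t, k⟩
  simp [Matrix.conjTranspose_apply, Matrix.kroneckerMap_apply, Matrix.one_apply,
    apply_ite (star : ℂ → ℂ), eq_comm]

lemma kron_mul_conjTranspose [NeZero n] {m : ℕ} (a b : Fin n) :
    ((1 : Matrix (Fin m) (Fin m) ℂ) ⊗ₖ Wop n a b) *
      ((1 : Matrix (Fin m) (Fin m) ℂ) ⊗ₖ Wop n a b)ᴴ = 1 := by
  rw [one_kron_conjTranspose, ← Matrix.mul_kronecker_mul, Matrix.one_mul,
    Wop_mul_conjTranspose, Matrix.one_kronecker_one]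


lemma kron_mul_apply [NeZero n] {m : ℕ} (a b : Fin n)
    (M : Matrix (Fin m × Fin n) (Fin m × Fin n) ℂ)
    (s : Fin m) (j : Fin n) (y : Fin m × Fin n) :
    (((1 : Matrix (Fin m) (Fin m) ℂ) ⊗ₖ Wop n a b) * M) (s, j) y =
      (zet n) ^ (((b : ℕ) : ℤ) * (((j - a : Fin n) : ℕ) : ℤ)) * M (s, j - a) y := by
  rw [Matrix.mul_apply, Fintype.sum_prod_type]
  simp [Matrix.one_apply, Wop, ite_mul, zero_mul, one_mul, mul_ite, mul_zero,
    Finset.sum_ite_eq, Finset.sum_ite_eq']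

lemma mul_kron_conj_apply [NeZero n] {m : ℕ} (a b : Fin n)
    (M : Matrix (Fin m × Fin n) (Fin m × Fin n) ℂ)
    (y : Fin m × Fin n) (s' : Fin m) (k : Fin n) :
    (M * ((1 : Matrix (Fin m) (Fin m) ℂ) ⊗ₖ Wop n a b)ᴴ) y (s', k) =
      star ((zet n) ^ (((b : ℕ) : ℤ) * (((k - a : Fin n) : ℕ) : ℤ))) * M y (s', k - a) := by
  rw [Matrix.mul_apply, Fintype.sum_prod_type]
  simp [Matrix.one_apply, Wop, Matrix.conjTranspose_apply, apply_ite (star : ℂ → ℂ),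
    ite_mul, zero_mul, one_mul, mul_ite, mul_zero, Finset.sum_ite_eq, Finset.sum_ite_eq',
    mul_comm]

lemma twirl [NeZero n] {m : ℕ} (A : Matrix (Fin m × Fin n) (Fin m × Fin n) ℂ) :
    ∑ a : Fin n, ∑ b : Fin n,
        ((1 : Matrix (Fin m) (Fin m) ℂ) ⊗ₖ Wop n a b) * A *
          ((1 : Matrix (Fin m) (Fin m) ℂ) ⊗ₖ Wop n a b)ᴴ =
      (n : ℂ) • ((Matrix.of fun s s' : Fin m => ∑ c : Fin n, A (s, c) (s', c)) ⊗ₖ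
        (1 : Matrix (Fin n) (Fin n) ℂ)) := by
  have hn : 0 < n := Nat.pos_of_ne_zero (NeZero.ne n)
  have hζ0 := zet_ne_zero hn
  ext ⟨s, j⟩ ⟨s', k⟩
  simp only [Matrix.sum_apply]
  have hterm : ∀ a b : Fin n,
      (((1 : Matrix (Fin m) (Fin m) ℂ) ⊗ₖ Wop n a b) * A *
          ((1 : Matrix (Fin m) (Fin m) ℂ) ⊗ₖ Wop n a b)ᴴ) (s, j) (s', k) =
        (zet n) ^ (((b : ℕ) : ℤ) * ((((j - a : Fin n) : ℕ) : ℤ) - (((k - a : Fin n) : ℕ) : ℤ)))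
          * A (s, j - a) (s', k - a) := by
    intro a b
    rw [mul_kron_conj_apply, kron_mul_apply, star_zet, ← mul_assoc,
      ← _root_.zpow_add₀ hζ0]
    ring_nf
  simp only [hterm]
  have hsum : ∀ a : Fin n,
      ∑ b : Fin n, (zet n) ^ (((b : ℕ) : ℤ) *
          ((((j - a : Fin n) : ℕ) : ℤ) - (((k - a : Fin n) : ℕ) : ℤ))) *
          A (s, j - a) (s', k - a) =
        (if j = k then (n : ℂ) else 0) * A (s, j - a) (s', k - a) := by
    intro a
    rw [← Finset.sum_mul, rootsum hn]
    congr 1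
    simp [sub_left_inj]
  simp only [hsum]
  by_cases hjk : j = k
  · subst hjk
    simp only [if_pos rfl, Matrix.smul_apply, Matrix.kroneckerMap_apply, Matrix.of_apply,
      Matrix.one_apply_eq, mul_one, smul_eq_mul]
    rw [← Finset.mul_sum]
    congr 1
    exact Fintype.sum_equiv (Equiv.subLeft j) _ _ (fun a => rfl)
  · simp [hjk, Matrix.one_apply_ne hjk]

end PTA18

/-- if the Heisenberg-evolved operator `A_X(t)` on `H_S ⊗ H_{S̄}` satisfies
the Lieb-Robinson bound `‖[A_X(t), B]‖ ≤ C |X| e^{−μ r}` for all norm-one operators `B`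
supported on the complement `S̄` of the radius-`r` ball `S` around `X` (i.e. of the form
`1_S ⊗ b`), then the normalized-partial-trace approximation
`O' = (tr_{S̄} A_X(t) ⊗ 1_{S̄}) / tr(1_{S̄})` satisfies `‖A_X(t) − O'‖ ≤ C |X| e^{−μ r}`. -/
theorem partial_trace_approximation_of_LRB {nS nSbar : ℕ} (hSbar : 0 < nSbar)
    (A : Matrix (Fin nS × Fin nSbar) (Fin nS × Fin nSbar) ℂ)
    (hA : ‖A‖ ≤ 1)
    (C μ r : ℝ) (hC : 0 < C) (hμ : 0 < μ) (hr : 0 ≤ r) (X : ℕ)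
    (hLRB : ∀ b : Matrix (Fin nSbar) (Fin nSbar) ℂ,
      ‖((1 : Matrix (Fin nS) (Fin nS) ℂ) ⊗ₖ b)‖ ≤ 1 →
      ‖A * ((1 : Matrix (Fin nS) (Fin nS) ℂ) ⊗ₖ b)
          - ((1 : Matrix (Fin nS) (Fin nS) ℂ) ⊗ₖ b) * A‖ ≤ C * X * Real.exp (-μ * r))
    (O' : Matrix (Fin nS × Fin nSbar) (Fin nS × Fin nSbar) ℂ)
    (hO' : O' = ((1 : ℂ) / (nSbar : ℂ)) •
      ((Matrix.of fun a a' : Fin nS => ∑ c : Fin nSbar, A (a, c) (a', c)) ⊗ₖ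
        (1 : Matrix (Fin nSbar) (Fin nSbar) ℂ))) :
    ‖A - O'‖ ≤ C * X * Real.exp (-μ * r) := by
  classical
  haveI : NeZero nSbar := ⟨hSbar.ne'⟩
  have hKpos : (0:ℝ) ≤ C * X * Real.exp (-μ * r) := by positivity
  set K := C * X * Real.exp (-μ * r) with hK
  set B : Fin nSbar → Fin nSbar → Matrix (Fin nS × Fin nSbar) (Fin nS × Fin nSbar) ℂ :=
    fun a b => (1 : Matrix (Fin nS) (Fin nS) ℂ) ⊗ₖ PTA18.Wop nSbar a b with hB
  have hBB : ∀ a b, B a b * (B a b)ᴴ = 1 := fun a b => PTA18.kron_mul_conjTranspose a b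
  have hBB' : ∀ a b, (B a b)ᴴ * B a b = 1 := fun a b => mul_eq_one_comm.mp (hBB a b)
  have hone : ‖(1 : Matrix (Fin nS × Fin nSbar) (Fin nS × Fin nSbar) ℂ)‖ ≤ 1 := by
    have h := Matrix.l2_opNorm_conjTranspose_mul_self
      (1 : Matrix (Fin nS × Fin nSbar) (Fin nS × Fin nSbar) ℂ)
    rw [Matrix.conjTranspose_one, one_mul] at h
    nlinarith [norm_nonneg (1 : Matrix (Fin nS × Fin nSbar) (Fin nS × Fin nSbar) ℂ)]
  have hBnorm : ∀ a b, ‖B a b‖ ≤ 1 := by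
    intro a b
    have h := Matrix.l2_opNorm_conjTranspose_mul_self (B a b)
    rw [hBB' a b] at h
    nlinarith [norm_nonneg (B a b)]
  have hBHnorm : ∀ a b, ‖(B a b)ᴴ‖ ≤ 1 := fun a b => by
    rw [Matrix.l2_opNorm_conjTranspose]; exact hBnorm a b
  have hexp : ∀ a b, (A * B a b - B a b * A) * (B a b)ᴴ = A - B a b * A * (B a b)ᴴ := by
    intro a b
    rw [sub_mul, Matrix.mul_assoc A, hBB a b, Matrix.mul_one]
  have htwirl := PTA18.twirl (n := nSbar) (m := nS) A
  have hcast : ((nSbar : ℂ)) ≠ 0 := Nat.cast_ne_zero.mpr hSbar.ne'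
  have hS : ∑ a : Fin nSbar, ∑ b : Fin nSbar, (A * B a b - B a b * A) * (B a b)ᴴ =
      ((nSbar : ℂ) * nSbar) • (A - O') := by
    simp only [hexp, Finset.sum_sub_distrib]
    rw [htwirl, hO']
    simp only [Finset.sum_const, Finset.card_univ, Fintype.card_fin, smul_sub, smul_smul]
    rw [← Nat.cast_smul_eq_nsmul ℂ (nSbar * nSbar) A]
    congr 1
    · norm_cast
    · congr 1
      field_simp
  have hAO : A - O' = ((1 : ℂ) / ((nSbar : ℂ) * nSbar)) •
      ∑ a : Fin nSbar, ∑ b : Fin nSbar, (A * B a b - B a b * A) * (B a b)ᴴ := by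
    rw [hS, smul_smul, one_div, inv_mul_cancel₀ (mul_ne_zero hcast hcast), one_smul]
  have hterm : ∀ a b : Fin nSbar, ‖(A * B a b - B a b * A) * (B a b)ᴴ‖ ≤ K := by
    intro a b
    calc ‖(A * B a b - B a b * A) * (B a b)ᴴ‖
        ≤ ‖A * B a b - B a b * A‖ * ‖(B a b)ᴴ‖ := Matrix.l2_opNorm_mul _ _
      _ ≤ K * 1 := mul_le_mul (hLRB _ (hBnorm a b)) (hBHnorm a b) (norm_nonneg _) hKpos
      _ = K := mul_one K
  have hnorm_sum : ‖∑ a : Fin nSbar, ∑ b : Fin nSbar, (A * B a b - B a b * A) * (B a b)ᴴ‖ ≤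
      ((nSbar : ℝ) * nSbar) * K := by
    calc ‖∑ a : Fin nSbar, ∑ b : Fin nSbar, (A * B a b - B a b * A) * (B a b)ᴴ‖
        ≤ ∑ a : Fin nSbar, ‖∑ b : Fin nSbar, (A * B a b - B a b * A) * (B a b)ᴴ‖ :=
          norm_sum_le _ _
      _ ≤ ∑ a : Fin nSbar, ∑ b : Fin nSbar, ‖(A * B a b - B a b * A) * (B a b)ᴴ‖ :=
          Finset.sum_le_sum fun a _ => norm_sum_le _ _
      _ ≤ ∑ _a : Fin nSbar, ∑ _b : Fin nSbar, K :=
          Finset.sum_le_sum fun a _ => Finset.sum_le_sum fun b _ => hterm a b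
      _ = ((nSbar : ℝ) * nSbar) * K := by
          simp [Finset.sum_const, Finset.card_univ, Fintype.card_fin, nsmul_eq_mul]
          ring
  rw [hAO, norm_smul]
  have hc : ‖(1 : ℂ) / ((nSbar : ℂ) * nSbar)‖ = 1 / ((nSbar : ℝ) * nSbar) := by
    rw [norm_div, norm_one, norm_mul, Complex.norm_natCast]
  rw [hc]
  have hpos : (0:ℝ) < (nSbar : ℝ) * nSbar := by positivity
  calc (1 / ((nSbar : ℝ) * nSbar)) *
        ‖∑ a : Fin nSbar, ∑ b : Fin nSbar, (A * B a b - B a b * A) * (B a b)ᴴ‖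
      ≤ (1 / ((nSbar : ℝ) * nSbar)) * (((nSbar : ℝ) * nSbar) * K) := by
        exact mul_le_mul_of_nonneg_left hnorm_sum (by positivity)
    _ = K := by field_simp
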